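/- Let a, b1, b2 > 0 and x ∈ [0,1). Then g_{a,b1,b2}(x,1) = ln(1/(1−x)) + 2ψ(1) − ψ(a) − ψ(b1). Equivalently, Σ_{k=1}^∞ (b2)_k/(k·(b1+b2)_k) = ψ(b1+b2) − ψ(b1). -/

import Mathlib

open Real MeasureTheory

/-- Rising factorial (Pochhammer symbol) `(a)_k`. -/
noncomputable def poch (a : ℝ) (k : ℕ) : ℝ := (ascPochhammer ℝ k).eval a

/-- Euler beta function `B(p,q) = Γ(p)Γ(q)/Γ(p+q)`. -/
noncomputable def eulerBeta (p q : ℝ) : ℝ := Real.Gamma p * Real.Gamma q / Real.Gamma (p + q)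

/-- Digamma function `ψ(x) = Γ'(x)/Γ(x)`. -/
noncomputable def psi (x : ℝ) : ℝ := deriv Real.Gamma x / Real.Gamma x

/-- General term of the double series for `B(a,b₁+b₂)·F₁(a;b₁,b₂;a+b₁+b₂;x,y)`. -/
noncomputable def F1term (a b1 b2 x y : ℝ) (p : ℕ × ℕ) : ℝ :=
  poch a (p.1 + p.2) * poch b1 p.1 * poch b2 p.2 * x ^ p.1 * y ^ p.2 /
    (poch (a + b1 + b2) (p.1 + p.2) * (Nat.factorial p.1 : ℝ) * (Nat.factorial p.2 : ℝ))

/-- `f_{a,b₁,b₂}(x,y) = B(a,b₁+b₂)·F₁(a;b₁,b₂;a+b₁+b₂;x,y)` as a double series. -/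
noncomputable def f (a b1 b2 x y : ℝ) : ℝ :=
  eulerBeta a (b1 + b2) * ∑' p : ℕ × ℕ, F1term a b1 b2 x y p

/-- The approximation `g_{a,b₁,b₂}(x,y)`. -/
noncomputable def g (a b1 b2 x y : ℝ) : ℝ :=
  Real.log (1 / (1 - x)) + 2 * psi 1 - psi a - psi (b1 + b2) +
    ∑' k : ℕ, poch b2 (k + 1) / ((k + 1 : ℝ) * poch (b1 + b2) (k + 1)) *
      ((y - x) / (1 - x)) ^ (k + 1)

open Set
open scoped ENNReal NNReal


lemma poch_succ (a : ℝ) (k : ℕ) : poch a (k+1) = poch a k * (a + k) := by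
  simp [poch, ascPochhammer_succ_eval]

lemma poch_pos {a : ℝ} (ha : 0 < a) (k : ℕ) : 0 < poch a k := by
  induction k with
  | zero => simp [poch]
  | succ n ih => rw [poch_succ]; positivity

lemma Gamma_poch {a : ℝ} (ha : 0 < a) (k : ℕ) :
    Real.Gamma (a + k) = Real.Gamma a * poch a k := by
  induction k with
  | zero => simp [poch]
  | succ n ih =>
      have : a + (n+1 : ℕ) = (a + n) + 1 := by push_cast; ring
      rw [this, Real.Gamma_add_one (by positivity), ih, poch_succ]; ring

lemma real_beta {p q : ℝ} (hp : 0 < p) (hq : 0 < q) :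
    Real.Gamma p * Real.Gamma q =
      Real.Gamma (p + q) * ∫ t in Ioo (0:ℝ) 1, t ^ (p-1) * (1-t) ^ (q-1) := by
  have h := Complex.Gamma_mul_Gamma_eq_betaIntegral (s := p) (t := q)
    (by simpa using hp) (by simpa using hq)
  have heq : Complex.betaIntegral p q
      = ((∫ t in Ioo (0:ℝ) 1, t ^ (p-1) * (1-t) ^ (q-1) : ℝ) : ℂ) := by
    rw [← MeasureTheory.integral_Ioc_eq_integral_Ioo,
      ← intervalIntegral.integral_of_le zero_le_one, ← intervalIntegral.integral_ofReal,
      Complex.betaIntegral]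
    apply intervalIntegral.integral_congr
    intro t ht
    rw [Set.uIcc_of_le zero_le_one] at ht
    have h1 : ((t:ℂ)) ^ ((p:ℂ) - 1) = ((t ^ (p-1) : ℝ) : ℂ) := by
      rw [show ((p:ℂ) - 1) = ((p - 1 : ℝ) : ℂ) by push_cast; ring,
        Complex.ofReal_cpow ht.1]
    have h2 : ((1:ℂ) - (t:ℂ)) ^ ((q:ℂ) - 1) = (((1 - t) ^ (q-1) : ℝ) : ℂ) := by
      rw [show ((1:ℂ) - (t:ℂ)) = (((1 - t : ℝ)) : ℂ) by push_cast; ring,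
        show ((q:ℂ) - 1) = ((q - 1 : ℝ) : ℂ) by push_cast; ring,
        Complex.ofReal_cpow (by linarith [ht.2])]
    simp only []
    rw [h1, h2, ← Complex.ofReal_mul]
  rw [heq] at h
  have := congrArg Complex.re h
  simpa [← Complex.ofReal_mul, Complex.Gamma_ofReal, ← Complex.ofReal_add] using this

lemma beta_integrable {p q : ℝ} (hp : 0 < p) (hq : 0 < q) :
    IntegrableOn (fun t : ℝ => t ^ (p-1) * (1-t) ^ (q-1)) (Ioo 0 1) := by
  have h := Complex.betaIntegral_convergent (u := p) (v := q)
    (by simpa using hp) (by simpa using hq)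
  rw [intervalIntegrable_iff_integrableOn_Ioc_of_le zero_le_one] at h
  have h2 : IntegrableOn (fun t : ℝ => ((t:ℂ) ^ ((p:ℂ)-1) * (1-(t:ℂ)) ^ ((q:ℂ)-1)).re)
      (Ioo 0 1) := by
    have := (h.mono_set Ioo_subset_Ioc_self).re
    simpa [RCLike.re_to_complex, IntegrableOn] using this
  apply h2.congr_fun _ measurableSet_Ioo
  intro t ht
  simp only []
  have h1 : ((t:ℂ)) ^ ((p:ℂ) - 1) = ((t ^ (p-1) : ℝ) : ℂ) := by
    rw [show ((p:ℂ) - 1) = ((p - 1 : ℝ) : ℂ) by push_cast; ring,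
      Complex.ofReal_cpow ht.1.le]
  have h2 : ((1:ℂ) - (t:ℂ)) ^ ((q:ℂ) - 1) = (((1 - t) ^ (q-1) : ℝ) : ℂ) := by
    rw [show ((1:ℂ) - (t:ℂ)) = (((1 - t : ℝ)) : ℂ) by push_cast; ring,
      show ((q:ℂ) - 1) = ((q - 1 : ℝ) : ℂ) by push_cast; ring,
      Complex.ofReal_cpow (by linarith [ht.2])]
  rw [h1, h2, ← Complex.ofReal_mul, Complex.ofReal_re]

lemma neg_log_le {t c : ℝ} (ht : 0 < t) (ht1 : t ≤ 1) (hc : 0 < c) :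
    -Real.log t ≤ (1/c) * t ^ (-c) := by
  have h : Real.log (t ^ (-c)) ≤ t ^ (-c) := by
    have := Real.log_le_sub_one_of_pos (Real.rpow_pos_of_pos ht (-c))
    linarith
  rw [Real.log_rpow ht] at h
  rw [one_div, inv_mul_eq_div, le_div_iff₀ hc]
  nlinarith [h]

lemma contOn_pow (p q : ℝ) : ContinuousOn (fun t : ℝ => t ^ (p-1) * (1-t) ^ (q-1))
    (Ioo 0 1) := by
  apply continuousOn_of_forall_continuousAt
  intro t ht
  have h1 : ContinuousAt (fun x : ℝ => x ^ (p-1)) t :=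
    Real.continuousAt_rpow_const t (p-1) (Or.inl ht.1.ne')
  have h2 : ContinuousAt (fun x : ℝ => (1-x) ^ (q-1)) t := by
    have := Real.continuousAt_rpow_const (1-t) (q-1) (Or.inl (by simp; linarith [ht.2]))
    exact this.comp ((continuous_const.sub continuous_id).continuousAt)
  exact h1.mul h2

lemma contOn_log (p q : ℝ) :
    ContinuousOn (fun t : ℝ => t ^ (p-1) * (1-t) ^ (q-1) * Real.log (1-t)) (Ioo 0 1) := by
  apply (contOn_pow p q).mul
  apply continuousOn_of_forall_continuousAt
  intro t ht
  exact (Real.continuousAt_log (by simp; linarith [ht.2])).comp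
    ((continuous_const.sub continuous_id).continuousAt)

lemma log_integrable {p q : ℝ} (hp : 0 < p) (hq : 0 < q) :
    IntegrableOn (fun t : ℝ => t ^ (p-1) * (1-t) ^ (q-1) * Real.log (1-t)) (Ioo 0 1) := by
  have hbound : IntegrableOn (fun t : ℝ => (1/(q/2)) * (t ^ (p-1) * (1-t) ^ (q/2-1)))
      (Ioo 0 1) := (beta_integrable hp (by linarith)).const_mul _
  apply MeasureTheory.Integrable.mono hbound ((contOn_log p q).aestronglyMeasurable measurableSet_Ioo)
  rw [ae_restrict_iff' measurableSet_Ioo]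
  filter_upwards with t ht
  have ht0 : 0 < t := ht.1
  have ht1 : 0 < 1 - t := by linarith [ht.2]
  have h1 : 0 ≤ t ^ (p-1) := (Real.rpow_pos_of_pos ht0 _).le
  have h2 : 0 ≤ (1-t) ^ (q-1) := (Real.rpow_pos_of_pos ht1 _).le
  have hlog : -Real.log (1-t) ≤ (1/(q/2)) * (1-t) ^ (-(q/2)) :=
    neg_log_le ht1 (by linarith) (by linarith)
  have hlog0 : Real.log (1-t) ≤ 0 := Real.log_nonpos (by linarith) (by linarith)
  rw [Real.norm_eq_abs, abs_mul, abs_of_nonneg (mul_nonneg h1 h2), abs_of_nonpos hlog0,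
    Real.norm_eq_abs]
  have key : t ^ (p-1) * (1-t) ^ (q-1) * -Real.log (1-t)
      ≤ (1/(q/2)) * (t ^ (p-1) * (1-t) ^ (q/2-1)) := by
    have := mul_le_mul_of_nonneg_left hlog (mul_nonneg h1 h2)
    calc t ^ (p-1) * (1-t) ^ (q-1) * -Real.log (1-t)
        ≤ t ^ (p-1) * (1-t) ^ (q-1) * ((1/(q/2)) * (1-t) ^ (-(q/2))) := this
      _ = (1/(q/2)) * (t ^ (p-1) * ((1-t) ^ (q-1) * (1-t) ^ (-(q/2)))) := by ring
      _ = (1/(q/2)) * (t ^ (p-1) * (1-t) ^ (q/2-1)) := by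
          rw [← Real.rpow_add ht1]; ring_nf
  calc t ^ (p-1) * (1-t) ^ (q-1) * -Real.log (1-t)
      ≤ (1/(q/2)) * (t ^ (p-1) * (1-t) ^ (q/2-1)) := key
    _ ≤ |(1/(q/2)) * (t ^ (p-1) * (1-t) ^ (q/2-1))| := le_abs_self _

open Metric in
lemma hasDerivAt_betaInt {b1 b2 : ℝ} (hb1 : 0 < b1) (hb2 : 0 < b2) :
    HasDerivAt (fun s => ∫ t in Ioo (0:ℝ) 1, t ^ (b2-1) * (1-t) ^ (s-1))
      (∫ t in Ioo (0:ℝ) 1, t ^ (b2-1) * (1-t) ^ (b1-1) * Real.log (1-t)) b1 := by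
  have main := hasDerivAt_integral_of_dominated_loc_of_deriv_le
    (μ := volume.restrict (Ioo (0:ℝ) 1)) (x₀ := b1)
    (F := fun s t => t ^ (b2-1) * (1-t) ^ (s-1))
    (F' := fun s t => t ^ (b2-1) * (1-t) ^ (s-1) * Real.log (1-t))
    (bound := fun t => (1/(b1/4)) * (t ^ (b2-1) * (1-t) ^ (b1/4-1)))
    (s := ball b1 (b1/2)) (ball_mem_nhds b1 (by positivity))
    (Filter.Eventually.of_forall fun s =>
      (contOn_pow b2 s).aestronglyMeasurable measurableSet_Ioo)
    (beta_integrable hb2 hb1)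
    ((contOn_log b2 b1).aestronglyMeasurable measurableSet_Ioo)
    ?_ ((beta_integrable hb2 (by positivity : (0:ℝ) < b1/4)).const_mul _) ?_
  · exact main.2
  · rw [ae_restrict_iff' measurableSet_Ioo]
    filter_upwards with t ht s hs
    have ht0 : 0 < t := ht.1
    have ht1 : 0 < 1 - t := by linarith [ht.2]
    have hs2 : b1/2 < s := by
      have := abs_lt.mp (mem_ball_iff_norm.mp hs)
      linarith [this.1]
    have h1 : 0 ≤ t ^ (b2-1) := (Real.rpow_pos_of_pos ht0 _).le
    have h2 : 0 ≤ (1-t) ^ (s-1) := (Real.rpow_pos_of_pos ht1 _).le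
    have hlog0 : Real.log (1-t) ≤ 0 := Real.log_nonpos (by linarith) (by linarith)
    rw [Real.norm_eq_abs, abs_mul, abs_of_nonneg (mul_nonneg h1 h2), abs_of_nonpos hlog0]
    have hlog : -Real.log (1-t) ≤ (1/(b1/4)) * (1-t) ^ (-(b1/4)) :=
      neg_log_le ht1 (by linarith) (by positivity)
    calc t ^ (b2-1) * (1-t) ^ (s-1) * -Real.log (1-t)
        ≤ t ^ (b2-1) * (1-t) ^ (s-1) * ((1/(b1/4)) * (1-t) ^ (-(b1/4))) :=
          mul_le_mul_of_nonneg_left hlog (mul_nonneg h1 h2)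
      _ = (1/(b1/4)) * (t ^ (b2-1) * (1-t) ^ (s-1-b1/4)) := by
          rw [show s-1-b1/4 = (s-1) + (-(b1/4)) by ring, Real.rpow_add ht1]; ring
      _ ≤ (1/(b1/4)) * (t ^ (b2-1) * (1-t) ^ (b1/4-1)) := by
          have : (1-t) ^ (s-1-b1/4) ≤ (1-t) ^ (b1/4-1) :=
            Real.rpow_le_rpow_of_exponent_ge ht1 (by linarith) (by linarith)
          have := mul_le_mul_of_nonneg_left this h1
          nlinarith [this, (by positivity : (0:ℝ) < 1/(b1/4))]
  · rw [ae_restrict_iff' measurableSet_Ioo]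
    filter_upwards with t ht s _
    have ht1 : 0 < 1 - t := by linarith [ht.2]
    have h := ((Real.hasStrictDerivAt_const_rpow ht1 (s-1)).hasDerivAt.comp s
      ((hasDerivAt_id s).sub_const 1)).const_mul (t ^ (b2-1))
    convert h using 1
    · rfl
    · rfl
    · ring

lemma key_integral {b1 b2 : ℝ} (hb1 : 0 < b1) (hb2 : 0 < b2) :
    ∫ t in Ioo (0:ℝ) 1, t ^ (b2-1) * (1-t) ^ (b1-1) * Real.log (1-t)
      = (Real.Gamma b2 * Real.Gamma b1 / Real.Gamma (b1+b2)) * (psi b1 - psi (b1+b2)) := by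
  have hG1 : (0:ℝ) < Real.Gamma b1 := Real.Gamma_pos_of_pos hb1
  have hG2 : (0:ℝ) < Real.Gamma b2 := Real.Gamma_pos_of_pos hb2
  have hG12 : (0:ℝ) < Real.Gamma (b2+b1) := Real.Gamma_pos_of_pos (by linarith)
  have hd1 : HasDerivAt Real.Gamma (deriv Real.Gamma b1) b1 :=
    (Real.differentiableAt_Gamma
      (fun m => ne_of_gt (lt_of_le_of_lt (neg_nonpos.mpr (Nat.cast_nonneg m)) hb1))).hasDerivAt
  have hd2 : HasDerivAt (fun s : ℝ => Real.Gamma (b2+s)) (deriv Real.Gamma (b2+b1) * 1) b1 :=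
    HasDerivAt.comp b1 ((Real.differentiableAt_Gamma
      (fun m => ne_of_gt (lt_of_le_of_lt (neg_nonpos.mpr (Nat.cast_nonneg m)) (by linarith)))).hasDerivAt)
      ((hasDerivAt_id b1).const_add b2)
  have hdall : HasDerivAt (fun s : ℝ => Real.Gamma b2 * Real.Gamma s / Real.Gamma (b2+s))
      ((Real.Gamma b2 * deriv Real.Gamma b1 * Real.Gamma (b2+b1)
        - Real.Gamma b2 * Real.Gamma b1 * (deriv Real.Gamma (b2+b1) * 1))
        / Real.Gamma (b2+b1) ^ 2) b1 :=
    (hd1.const_mul (Real.Gamma b2)).div hd2 hG12.ne'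
  have heq : (fun s : ℝ => ∫ t in Ioo (0:ℝ) 1, t ^ (b2-1) * (1-t) ^ (s-1))
      =ᶠ[nhds b1] (fun s : ℝ => Real.Gamma b2 * Real.Gamma s / Real.Gamma (b2+s)) := by
    filter_upwards [eventually_gt_nhds hb1] with s hs
    have hG2s : (0:ℝ) < Real.Gamma (b2+s) := Real.Gamma_pos_of_pos (by linarith)
    rw [real_beta hb2 hs]
    field_simp
  have hF : HasDerivAt (fun s => ∫ t in Ioo (0:ℝ) 1, t ^ (b2-1) * (1-t) ^ (s-1))
      ((Real.Gamma b2 * deriv Real.Gamma b1 * Real.Gamma (b2+b1)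
        - Real.Gamma b2 * Real.Gamma b1 * (deriv Real.Gamma (b2+b1) * 1))
        / Real.Gamma (b2+b1) ^ 2) b1 := hdall.congr_of_eventuallyEq heq
  have := (hasDerivAt_betaInt hb1 hb2).unique hF
  rw [this, psi, psi, show b1+b2 = b2+b1 by ring]
  field_simp

lemma integral_term {b1 b2 : ℝ} (hb1 : 0 < b1) (hb2 : 0 < b2) (k : ℕ) :
    ∫ t in Ioo (0:ℝ) 1, t ^ (b2-1) * (1-t) ^ (b1-1) * (t ^ (k+1) / (k+1))
      = (Real.Gamma b2 * Real.Gamma b1 / Real.Gamma (b1+b2))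
        * (poch b2 (k+1) / (((k:ℝ)+1) * poch (b1+b2) (k+1))) := by
  have hk : (0:ℝ) < (k:ℝ) + 1 := by positivity
  have hcongr : ∀ t ∈ Ioo (0:ℝ) 1,
      t ^ (b2-1) * (1-t) ^ (b1-1) * (t ^ (k+1) / (k+1))
        = (1/((k:ℝ)+1)) * (t ^ ((b2 + ((k:ℕ)+1:ℕ)) - 1) * (1-t) ^ (b1-1)) := by
    intro t ht
    have ht0 : (0:ℝ) < t := ht.1
    have : t ^ ((b2 + ((k:ℕ)+1:ℕ)) - 1) = t ^ (b2-1) * t ^ (k+1) := by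
      rw [show ((b2 + ((k:ℕ)+1:ℕ)) - 1) = (b2-1) + ((k+1:ℕ):ℝ) by push_cast; ring,
        Real.rpow_add ht0, Real.rpow_natCast]
    rw [this]
    push_cast
    ring
  rw [setIntegral_congr_fun measurableSet_Ioo hcongr, MeasureTheory.integral_const_mul]
  have hb2k : (0:ℝ) < b2 + ((k:ℕ)+1:ℕ) := by positivity
  have hbeta := real_beta hb2k hb1
  have hG : (0:ℝ) < Real.Gamma (b2 + ((k:ℕ)+1:ℕ) + b1) := Real.Gamma_pos_of_pos (by positivity)
  have hint : ∫ t in Ioo (0:ℝ) 1, t ^ ((b2 + ((k:ℕ)+1:ℕ)) - 1) * (1-t) ^ (b1-1)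
      = Real.Gamma (b2 + ((k:ℕ)+1:ℕ)) * Real.Gamma b1 / Real.Gamma (b2 + ((k:ℕ)+1:ℕ) + b1) := by
    rw [hbeta]; field_simp
  rw [hint, Gamma_poch hb2 (k+1),
    show b2 + ((k:ℕ)+1:ℕ) + b1 = (b1+b2) + ((k:ℕ)+1:ℕ) by push_cast; ring,
    Gamma_poch (by linarith : (0:ℝ) < b1+b2) (k+1)]
  have h1 : Real.Gamma (b1+b2) ≠ 0 := (Real.Gamma_pos_of_pos (by linarith)).ne'
  have h2 : poch (b1+b2) (k+1) ≠ 0 := (poch_pos (by linarith) _).ne'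
  field_simp

lemma series_eq {b1 b2 : ℝ} (hb1 : 0 < b1) (hb2 : 0 < b2) :
    ∑' k : ℕ, poch b2 (k + 1) / ((k + 1 : ℝ) * poch (b1 + b2) (k + 1)) =
      psi (b1 + b2) - psi b1 := by
  set B : ℝ := Real.Gamma b2 * Real.Gamma b1 / Real.Gamma (b1+b2) with hB
  have hBpos : 0 < B := by
    have h1 := Real.Gamma_pos_of_pos hb1
    have h2 := Real.Gamma_pos_of_pos hb2
    have h3 := Real.Gamma_pos_of_pos (by linarith : (0:ℝ) < b1+b2)
    positivity
  set F : ℕ → ℝ → ℝ := fun k t => t ^ (b2-1) * (1-t) ^ (b1-1) * (t ^ (k+1) / (k+1)) with hF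
  have hFcont : ∀ k, ContinuousOn (F k) (Ioo 0 1) := by
    intro k
    exact (contOn_pow b2 b1).mul ((continuous_pow (k+1)).continuousOn.div_const _)
  have hFmeas : ∀ k, AEStronglyMeasurable (F k) (volume.restrict (Ioo (0:ℝ) 1)) :=
    fun k => (hFcont k).aestronglyMeasurable measurableSet_Ioo
  have hFnonneg : ∀ k, ∀ t ∈ Ioo (0:ℝ) 1, 0 ≤ F k t := by
    intro k t ht
    have ht0 : (0:ℝ) < t := ht.1
    have ht1 : (0:ℝ) < 1 - t := by linarith [ht.2]
    have : (0:ℝ) < (k:ℝ) + 1 := by positivity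
    have h1 := Real.rpow_pos_of_pos ht0 (b2-1)
    have h2 := Real.rpow_pos_of_pos ht1 (b1-1)
    positivity
  set h : ℝ → ℝ := fun t => t ^ (b2-1) * (1-t) ^ (b1-1) * (-Real.log (1-t)) with hh
  have hHasSum : ∀ t ∈ Ioo (0:ℝ) 1, HasSum (fun k => F k t) (h t) := by
    intro t ht
    have habs : |t| < 1 := abs_lt.mpr ⟨by linarith [ht.1], ht.2⟩
    have := (Real.hasSum_pow_div_log_of_abs_lt_one habs).mul_left
      (t ^ (b2-1) * (1-t) ^ (b1-1))
    have heq : (fun k : ℕ => F k t)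
        = fun k : ℕ => t ^ (b2-1) * (1-t) ^ (b1-1) * (t ^ (k+1) / ((k:ℝ)+1)) := rfl
    rw [heq]
    convert this using 2 with k
    
  have hint : IntegrableOn h (Ioo (0:ℝ) 1) := by
    have hneg : IntegrableOn (fun t : ℝ => -(t ^ (b2-1) * (1-t) ^ (b1-1) * Real.log (1-t)))
        (Ioo (0:ℝ) 1) := (log_integrable hb2 hb1).neg
    apply hneg.congr_fun _ measurableSet_Ioo
    intro t ht
    simp [hh]
  -- lintegral bound
  have hlint : (∑' k : ℕ, ∫⁻ t in Ioo (0:ℝ) 1, (‖F k t‖₊ : ℝ≥0∞)) ≠ ⊤ := by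
    rw [← MeasureTheory.lintegral_tsum (fun k => (hFmeas k).nnnorm.aemeasurable.coe_nnreal_ennreal)]
    have hcongr : ∀ᵐ t ∂(volume.restrict (Ioo (0:ℝ) 1)),
        (∑' k, (‖F k t‖₊ : ℝ≥0∞)) = ENNReal.ofReal (h t) := by
      rw [ae_restrict_iff' measurableSet_Ioo]
      filter_upwards with t ht
      have hsum := hHasSum t ht
      have he : ∀ k, (‖F k t‖₊ : ℝ≥0∞) = ENNReal.ofReal (F k t) := fun k => by
        rw [← enorm_eq_nnnorm, Real.enorm_eq_ofReal (hFnonneg k t ht)]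
      simp_rw [he]
      rw [← ENNReal.ofReal_tsum_of_nonneg (fun k => hFnonneg k t ht) hsum.summable,
        hsum.tsum_eq]
    rw [lintegral_congr_ae hcongr]
    have hfin : ∫⁻ t in Ioo (0:ℝ) 1, ENNReal.ofReal (h t) < ⊤ :=
      lt_of_le_of_lt (lintegral_mono fun t => Real.ofReal_le_enorm (h t))
        hint.hasFiniteIntegral
    exact hfin.ne
  have hswap := MeasureTheory.integral_tsum (μ := volume.restrict (Ioo (0:ℝ) 1))
    (f := F) hFmeas hlint
  have hL : ∫ t in Ioo (0:ℝ) 1, ∑' k, F k t = B * (psi (b1+b2) - psi b1) := by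
    rw [setIntegral_congr_fun measurableSet_Ioo (fun t ht => (hHasSum t ht).tsum_eq)]
    have : ∫ t in Ioo (0:ℝ) 1, h t
        = - ∫ t in Ioo (0:ℝ) 1, t ^ (b2-1) * (1-t) ^ (b1-1) * Real.log (1-t) := by
      rw [← MeasureTheory.integral_neg]
      apply setIntegral_congr_fun measurableSet_Ioo
      intro t ht
      simp [hh]
    rw [this, key_integral hb1 hb2, hB]
    ring
  have hR : ∑' k, ∫ t in Ioo (0:ℝ) 1, F k t
      = B * ∑' k : ℕ, poch b2 (k + 1) / ((k + 1 : ℝ) * poch (b1 + b2) (k + 1)) := by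
    rw [← tsum_mul_left]
    congr 1
    funext k
    exact integral_term hb1 hb2 k
  rw [hswap, hR] at hL
  exact (mul_left_cancel₀ hBpos.ne' hL.symm).symm

/-- at `y = 1` the approximation `g` reduces to Ramanujan's approximation. -/
theorem g_at_one (a b1 b2 x : ℝ) (ha : 0 < a) (hb1 : 0 < b1) (hb2 : 0 < b2)
    (hx0 : 0 ≤ x) (hx1 : x < 1) :
    g a b1 b2 x 1 = Real.log (1 / (1 - x)) + 2 * psi 1 - psi a - psi b1 ∧
    ∑' k : ℕ, poch b2 (k + 1) / ((k + 1 : ℝ) * poch (b1 + b2) (k + 1)) =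
      psi (b1 + b2) - psi b1 := by
  have hx : (1 - x) / (1 - x) = (1:ℝ) := div_self (by linarith)
  have hser := series_eq hb1 hb2
  constructor
  · show Real.log (1 / (1 - x)) + 2 * psi 1 - psi a - psi (b1 + b2) +
      (∑' k : ℕ, poch b2 (k + 1) / ((k + 1 : ℝ) * poch (b1 + b2) (k + 1)) *
        ((1 - x) / (1 - x)) ^ (k + 1)) = _
    simp only [hx, one_pow, mul_one]
    rw [hser]
    ring
  · exact hser
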